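/- Let R > 0, let D ⊆ ℝ^d be a measurable subset of the closed ball B(0, R), let z* ∈ D, let β, L > 0, and let F : ℝ^d → ℝ be measurable with 0 ≤ F(z) ≤ (L/2)‖z − z*‖² for all z ∈ D. Let Λ = ∫_D exp(−β F(z)) dz (finite and positive), let π be the Gibbs probability measure on ℝ^d with density p(z) = exp(−β F(z))·1_D(z)/Λ, and assume F is π-integrable and h(p) = −∫ p log p is well defined. Then ∫ F dπ ≤ (1/β)·[ (d/2)·log(2πe R²/d) − log ∫_D exp(−(βL/2)‖z − z*‖²) dz ]. -/

import Mathlib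

open MeasureTheory

lemma gibbs_aux {x y : ℝ} (hx : 0 ≤ x) (hy : 0 < y) :
    x - y ≤ x * Real.log x - x * Real.log y := by
  rcases eq_or_lt_of_le hx with h | h
  · simp [← h]; linarith
  · have h1 : Real.log (y / x) ≤ y / x - 1 := Real.log_le_sub_one_of_pos (by positivity)
    have h2 : Real.log (y / x) = Real.log y - Real.log x := Real.log_div hy.ne' h.ne'
    have h3 : x * (y / x - 1) = y - x := by field_simp
    nlinarith [mul_le_mul_of_nonneg_left h1 hx]

set_option maxHeartbeats 2000000 in
/-- Expected loss under the Gibbs measure supported on `D ⊆ B(0, R)`: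
`∫ F dπ ≤ (1/β)[(d/2)log(2πeR²/d) − log ∫_D exp(−(βL/2)‖z − z*‖²)]`. -/
theorem gibbs_expected_loss_bound
    {d : ℕ} (R : ℝ) (hR : 0 < R)
    (D : Set (EuclideanSpace ℝ (Fin d))) (hD : MeasurableSet D)
    (hDball : D ⊆ Metric.closedBall 0 R)
    (zstar : EuclideanSpace ℝ (Fin d)) (hzstar : zstar ∈ D)
    (β L : ℝ) (hβ : 0 < β) (hL : 0 < L)
    (F : EuclideanSpace ℝ (Fin d) → ℝ) (hFmeas : Measurable F)
    (hF : ∀ z ∈ D, 0 ≤ F z ∧ F z ≤ L / 2 * ‖z - zstar‖ ^ 2)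
    (Λ : ℝ) (hΛ : Λ = ∫ z in D, Real.exp (-β * F z)) (hΛpos : 0 < Λ)
    (p : EuclideanSpace ℝ (Fin d) → ℝ)
    (hp : ∀ z, p z =
      Real.exp (-β * F z) * D.indicator (fun _ => (1 : ℝ)) z / Λ)
    (hFint : IntegrableOn (fun z => F z * p z) D)
    (hent : IntegrableOn (fun z => p z * Real.log (p z)) D) :
    ∫ z in D, F z * p z ≤
      1 / β * ((d : ℝ) / 2 * Real.log (2 * Real.pi * Real.exp 1 * R ^ 2 / d) -
        Real.log (∫ z in D, Real.exp (-(β * L / 2) * ‖z - zstar‖ ^ 2))) := by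
  have hπ := Real.pi_pos
  -- basic measure facts
  have hDfin : volume D < ⊤ := lt_of_le_of_lt (measure_mono hDball) measure_closedBall_lt_top
  have hDne : volume D ≠ 0 := by
    intro h
    have : Λ = 0 := by rw [hΛ, Measure.restrict_eq_zero.mpr h, integral_zero_measure]
    linarith
  have hDreal : 0 < (volume D).toReal := ENNReal.toReal_pos hDne hDfin.ne
  -- norms on D
  have hnorm : ∀ z ∈ D, ‖z‖ ≤ R := by
    intro z hz
    simpa [Metric.mem_closedBall, dist_zero_right] using hDball hz
  have hnorm2 : ∀ z ∈ D, ‖z - zstar‖ ≤ 2 * R := by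
    intro z hz
    calc ‖z - zstar‖ ≤ ‖z‖ + ‖zstar‖ := norm_sub_le _ _
    _ ≤ R + R := add_le_add (hnorm z hz) (hnorm zstar hzstar)
    _ = 2 * R := by ring
  -- p on D
  have hpD : ∀ z ∈ D, p z = Real.exp (-β * F z) / Λ := by
    intro z hz; rw [hp z, Set.indicator_of_mem hz]; ring
  have hp_nonneg : ∀ z, 0 ≤ p z := by
    intro z
    rw [hp z]
    apply div_nonneg _ hΛpos.le
    exact mul_nonneg (Real.exp_nonneg _) (Set.indicator_nonneg (fun _ _ => zero_le_one) _)
  have hp_pos : ∀ z ∈ D, 0 < p z := by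
    intro z hz; rw [hpD z hz]; positivity
  have hexp_le_one : ∀ z ∈ D, Real.exp (-β * F z) ≤ 1 := by
    intro z hz
    apply Real.exp_le_one_iff.mpr
    nlinarith [(hF z hz).1]
  have hp_le : ∀ z ∈ D, p z ≤ 1 / Λ := by
    intro z hz
    rw [hpD z hz]
    gcongr
    exact hexp_le_one z hz
  -- integrability
  have hexp_meas : Measurable fun z => Real.exp (-β * F z) := (hFmeas.const_mul (-β)).exp
  have hexp_int : IntegrableOn (fun z => Real.exp (-β * F z)) D := by
    apply Measure.integrableOn_of_bounded hDfin.ne hexp_meas.aestronglyMeasurable (M := 1)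
    filter_upwards [ae_restrict_mem hD] with z hz
    rw [Real.norm_eq_abs, abs_of_nonneg (Real.exp_nonneg _)]
    exact hexp_le_one z hz
  have hp_meas : Measurable p := by
    have : p = fun z => Real.exp (-β * F z) * D.indicator (fun _ => (1 : ℝ)) z / Λ :=
      funext hp
    rw [this]
    exact (hexp_meas.mul (measurable_const.indicator hD)).div_const Λ
  have hp_int : IntegrableOn p D := by
    apply Measure.integrableOn_of_bounded hDfin.ne hp_meas.aestronglyMeasurable (M := 1 / Λ)
    filter_upwards [ae_restrict_mem hD] with z hz
    rw [Real.norm_eq_abs, abs_of_nonneg (hp_nonneg z)]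
    exact hp_le z hz
  have hp_one : ∫ z in D, p z = 1 := by
    rw [setIntegral_congr_fun hD hpD, integral_div, ← hΛ, div_self hΛpos.ne']
  -- the comparison integral I
  set I := ∫ z in D, Real.exp (-(β * L / 2) * ‖z - zstar‖ ^ 2) with hI_def
  have hG_cont : Continuous fun z : EuclideanSpace ℝ (Fin d) =>
      Real.exp (-(β * L / 2) * ‖z - zstar‖ ^ 2) :=
    (continuous_const.mul (((continuous_id.sub continuous_const).norm).pow 2)).rexp
  have hG_int : IntegrableOn
      (fun z : EuclideanSpace ℝ (Fin d) => Real.exp (-(β * L / 2) * ‖z - zstar‖ ^ 2)) D := by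
    apply Measure.integrableOn_of_bounded hDfin.ne hG_cont.aestronglyMeasurable (M := 1)
    filter_upwards with z
    rw [Real.norm_eq_abs, abs_of_nonneg (Real.exp_nonneg _)]
    apply Real.exp_le_one_iff.mpr
    nlinarith [mul_nonneg (mul_pos hβ hL).le (sq_nonneg ‖z - zstar‖)]
  have hIΛ : I ≤ Λ := by
    rw [hΛ, hI_def]
    apply setIntegral_mono_on hG_int hexp_int hD
    intro z hz
    apply Real.exp_le_exp.mpr
    nlinarith [(hF z hz).2]
  have hIpos : 0 < I := by
    have h := setIntegral_ge_of_const_le (f := fun z : EuclideanSpace ℝ (Fin d) =>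
        Real.exp (-(β * L / 2) * ‖z - zstar‖ ^ 2)) hD hDfin.ne
      (fun z hz => by
        apply Real.exp_le_exp.mpr
        have h1 := hnorm2 z hz
        have h2 : ‖z - zstar‖ ^ 2 ≤ (2 * R) ^ 2 := by nlinarith [norm_nonneg (z - zstar)]
        nlinarith [mul_le_mul_of_nonneg_left h2 (by positivity : (0:ℝ) ≤ β * L / 2)]) hG_int (c := Real.exp (-(β * L / 2) * (2 * R) ^ 2))
    calc (0:ℝ) < Real.exp (-(β * L / 2) * (2 * R) ^ 2) * (volume D).toReal := by positivity
    _ ≤ I := by rw [smul_eq_mul, mul_comm] at h; exact h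
  have hlogI : Real.log I ≤ Real.log Λ := Real.log_le_log hIpos hIΛ
  -- main bound with log Λ
  have hmain : β * ∫ z in D, F z * p z ≤
      (d : ℝ) / 2 * Real.log (2 * Real.pi * Real.exp 1 * R ^ 2 / d) - Real.log Λ := by
    rcases Nat.eq_zero_or_pos d with hd | hd
    · -- dimension 0
      subst hd
      haveI : Subsingleton (EuclideanSpace ℝ (Fin 0)) :=
        ⟨fun a b => by ext i; exact Fin.elim0 i⟩
      have hFz : ∀ z ∈ D, F z = 0 := by
        intro z hz
        have h1 := (hF z hz).1
        have h2 := (hF z hz).2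
        rw [Subsingleton.elim z zstar] at h1 h2 ⊢
        simp at h2
        linarith
      have hLHS : ∫ z in D, F z * p z = 0 := by
        rw [setIntegral_congr_fun hD (fun z hz => by rw [hFz z hz, zero_mul]), integral_zero]
      have huniv : volume (Set.univ : Set (EuclideanSpace ℝ (Fin 0))) = 1 := by
        have h := (EuclideanSpace.volume_preserving_symm_measurableEquiv_toLp (ι := Fin 0)).measure_preimage
          (MeasurableSet.univ (α := Fin 0 → ℝ)).nullMeasurableSet
        rw [Set.preimage_univ] at h
        rw [h, volume_pi, Measure.pi_univ]
        simp
      have hDle : (volume D).toReal ≤ 1 := by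
        have h1 : volume D ≤ 1 := by
          rw [← huniv]; exact measure_mono (Set.subset_univ D)
        calc (volume D).toReal ≤ (1 : ENNReal).toReal :=
          ENNReal.toReal_mono (by norm_num) h1
        _ = 1 := by simp
      have hΛ_le : Λ ≤ 1 := by
        have h1 : Λ ≤ ∫ _z in D, (1:ℝ) := by
          rw [hΛ]
          exact setIntegral_mono_on hexp_int
            (integrableOn_const hDfin.ne) hD hexp_le_one
        have h2 : ∫ _z in D, (1:ℝ) = (volume D).toReal := by simp [Measure.real]
        linarith
      have : Real.log Λ ≤ 0 := Real.log_nonpos hΛpos.le hΛ_le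
      rw [hLHS]
      simp
      linarith
    · -- positive dimension
      have hdpos : (0:ℝ) < d := by exact_mod_cast hd
      set a := (d : ℝ) / (2 * R ^ 2) with ha_def
      have ha : 0 < a := by positivity
      set c := (a / Real.pi) ^ ((d : ℝ) / 2) with hc_def
      have hc : 0 < c := Real.rpow_pos_of_pos (div_pos ha hπ) _
      have hgauss_int : Integrable (fun z : EuclideanSpace ℝ (Fin d) =>
          Real.exp (-a * ‖z‖ ^ 2)) := by
        have h := (GaussianFourier.integrable_cexp_neg_mul_sq_norm_add (b := (a : ℂ))
          (by simpa using ha) 0 (0 : EuclideanSpace ℝ (Fin d))).norm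
        refine h.congr (Filter.Eventually.of_forall fun v => ?_)
        simp [Complex.norm_exp]
        exact Or.inl (by norm_cast)
      have hgauss_eq : ∫ z : EuclideanSpace ℝ (Fin d), Real.exp (-a * ‖z‖ ^ 2)
          = (Real.pi / a) ^ ((d : ℝ) / 2) := by
        rw [GaussianFourier.integral_rexp_neg_mul_sq_norm ha]
        norm_num [finrank_euclideanSpace_fin]
      have hq_int : Integrable (fun z : EuclideanSpace ℝ (Fin d) =>
          c * Real.exp (-a * ‖z‖ ^ 2)) := hgauss_int.const_mul c
      have hq_one : ∫ z : EuclideanSpace ℝ (Fin d), c * Real.exp (-a * ‖z‖ ^ 2) = 1 := by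
        rw [integral_const_mul, hgauss_eq, hc_def,
          ← Real.mul_rpow (by positivity) (by positivity)]
        have h1 : a / Real.pi * (Real.pi / a) = 1 := by field_simp
        rw [h1, Real.one_rpow]
      have hqD_le_one : ∫ z in D, c * Real.exp (-a * ‖z‖ ^ 2) ≤ 1 := by
        rw [← hq_one]
        exact setIntegral_le_integral hq_int (Filter.Eventually.of_forall fun z => by positivity)
      -- pointwise inequality
      have hpt : ∀ z ∈ D, β * (F z * p z) ≤
          (a * R ^ 2 - Real.log c - Real.log Λ) * p z - p z + c * Real.exp (-a * ‖z‖ ^ 2) := by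
        intro z hz
        have hppos : 0 < p z := hp_pos z hz
        have hqpos : 0 < c * Real.exp (-a * ‖z‖ ^ 2) := by positivity
        have hgibbs := gibbs_aux hppos.le hqpos
        have hlogp : Real.log (p z) = -β * F z - Real.log Λ := by
          rw [hpD z hz, Real.log_div (Real.exp_ne_zero _) hΛpos.ne', Real.log_exp]
        have hlogq : Real.log (c * Real.exp (-a * ‖z‖ ^ 2)) = Real.log c + -a * ‖z‖ ^ 2 := by
          rw [Real.log_mul hc.ne' (Real.exp_ne_zero _), Real.log_exp]
        rw [hlogp, hlogq] at hgibbs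
        have hz_le : ‖z‖ ^ 2 ≤ R ^ 2 := by nlinarith [hnorm z hz, norm_nonneg z]
        have e1 : p z * (-β * F z - Real.log Λ) - p z * (Real.log c + -a * ‖z‖ ^ 2)
            = -(β * (F z * p z)) - Real.log Λ * p z - Real.log c * p z
              + p z * (a * ‖z‖ ^ 2) := by ring
        rw [e1] at hgibbs
        have e2 : (a * R ^ 2 - Real.log c - Real.log Λ) * p z - p z
              + c * Real.exp (-a * ‖z‖ ^ 2)
            = p z * (a * R ^ 2) - Real.log c * p z - Real.log Λ * p z - p z
              + c * Real.exp (-a * ‖z‖ ^ 2) := by ring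
        rw [e2]
        have h2 : p z * (a * ‖z‖ ^ 2) ≤ p z * (a * R ^ 2) := by
          apply mul_le_mul_of_nonneg_left _ hppos.le
          exact mul_le_mul_of_nonneg_left hz_le ha.le
        linarith [hgibbs, h2]
      -- integrate
      have hrhs_int : IntegrableOn (fun z =>
          (a * R ^ 2 - Real.log c - Real.log Λ) * p z - p z
            + c * Real.exp (-a * ‖z‖ ^ 2)) D :=
        ((hp_int.const_mul _).sub hp_int).add hq_int.integrableOn
      have hlhs_int : IntegrableOn (fun z => β * (F z * p z)) D := hFint.const_mul β
      have hint1 : IntegrableOn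
          (fun x => (a * R ^ 2 - Real.log c - Real.log Λ) * p x) D :=
        hp_int.const_mul _
      have hint2 : IntegrableOn
          (fun x => (a * R ^ 2 - Real.log c - Real.log Λ) * p x - p x) D :=
        hint1.sub hp_int
      have hineq := setIntegral_mono_on hlhs_int hrhs_int hD hpt
      rw [integral_const_mul] at hineq
      have h4 := integral_add (μ := volume.restrict D)
        (f := fun x => (a * R ^ 2 - Real.log c - Real.log Λ) * p x - p x)
        (g := fun x : EuclideanSpace ℝ (Fin d) => c * Real.exp (-a * ‖x‖ ^ 2))
        hint2 hq_int.integrableOn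
      have h5 := integral_sub (μ := volume.restrict D)
        (f := fun x => (a * R ^ 2 - Real.log c - Real.log Λ) * p x)
        (g := p) hint1 hp_int
      rw [h4, h5, integral_const_mul, hp_one] at hineq
      -- identify the constant
      have hu : (0:ℝ) < 2 * Real.pi * R ^ 2 / (d : ℝ) := by positivity
      have hkey : a * R ^ 2 - Real.log c
          = (d : ℝ) / 2 * Real.log (2 * Real.pi * Real.exp 1 * R ^ 2 / (d : ℝ)) := by
        have h1 : Real.log c = (d : ℝ) / 2 * Real.log (a / Real.pi) :=
          Real.log_rpow (div_pos ha hπ) _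
        have h2 : a / Real.pi = (2 * Real.pi * R ^ 2 / (d : ℝ))⁻¹ := by
          rw [ha_def]
          field_simp
        have h3 : 2 * Real.pi * Real.exp 1 * R ^ 2 / (d : ℝ)
            = Real.exp 1 * (2 * Real.pi * R ^ 2 / (d : ℝ)) := by ring
        have haR : a * R ^ 2 = (d : ℝ) / 2 := by
          rw [ha_def]; field_simp
        rw [h3, Real.log_mul (Real.exp_ne_zero _) hu.ne', Real.log_exp, h1, h2,
          Real.log_inv, haR]
        ring
      linarith [hqD_le_one, hineq, hkey.le, hkey.ge]
  -- conclude
  have h2 : β * ∫ z in D, F z * p z ≤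
      (d : ℝ) / 2 * Real.log (2 * Real.pi * Real.exp 1 * R ^ 2 / d) - Real.log I := by
    linarith
  rw [one_div, inv_mul_eq_div]
  exact (le_div_iff₀ hβ).mpr (by linarith)
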